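/- Let the kernels A^{(n)}_{j} satisfy assumption A1 and let P^{(n)}_{n−j} be the associated complementary kernels. Then P^{(n)}_{n−1} · A^{(1)}_0 ≤ 1 for every 1 ≤ n ≤ N; in particular, if A^{(1)}_0 = ω_{2−α}(τ_1)/τ_1 (the first L1 kernel value of order α ∈ (0,1)), then P^{(n)}_{n−1} ≤ Γ(2−α) τ_1^α. -/

import Mathlib

open Real Finset

/-- The kernel `ω_μ(s) = s^(μ-1)/Γ(μ)`. -/
noncomputable def omegaK (μ s : ℝ) : ℝ := s ^ (μ - 1) / Real.Gamma μ

theorem complementary_kernel_first_entry_bound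
    (T : ℝ) (hT : 0 < T) (N : ℕ) (hN : 1 ≤ N)
    (t : ℕ → ℝ) (ht0 : t 0 = 0) (htN : t N = T)
    (hmesh : ∀ k, 1 ≤ k → k ≤ N → t (k - 1) < t k)
    (α : ℝ) (hα0 : 0 < α) (hα1 : α < 1)
    (A : ℕ → ℕ → ℝ)
    -- assumption A1
    (hA1 : ∀ n k, 2 ≤ k → k ≤ n → n ≤ N → A n (k - 2) ≥ A n (k - 1) ∧ 0 < A n (k - 1))
    (hApos : ∀ n, 1 ≤ n → n ≤ N → 0 < A n 0)
    -- the complementary kernel `P n j = P^{(n)}_{n-j}`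
    (P : ℕ → ℕ → ℝ)
    (hPdiag : ∀ n, 1 ≤ n → n ≤ N → P n n = 1 / A n 0)
    (hPrec : ∀ n j, 1 ≤ j → j + 1 ≤ n → n ≤ N →
      P n j = (1 / A j 0) *
        ∑ k ∈ Finset.Icc (j + 1) n, (A k (k - j - 1) - A k (k - j)) * P n k) :
    ∀ n, 1 ≤ n → n ≤ N →
      P n 1 * A 1 0 ≤ 1 ∧
      (A 1 0 = omegaK (2 - α) (t 1 - t 0) / (t 1 - t 0) →
        P n 1 ≤ Real.Gamma (2 - α) * (t 1 - t 0) ^ α) := by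
  intro n hn1 hnN
  -- nonnegativity of P n j
  have hPnn : ∀ d j, 1 ≤ j → j ≤ n → n - j ≤ d → 0 ≤ P n j := by
    intro d
    induction d with
    | zero =>
      intro j hj1 hjn hd
      have hj : j = n := by omega
      rw [hj, hPdiag n hn1 hnN]
      exact div_nonneg zero_le_one (le_of_lt (hApos n hn1 hnN))
    | succ d IH =>
      intro j hj1 hjn hd
      rcases eq_or_lt_of_le hjn with h | h
      · rw [h, hPdiag n hn1 hnN]
        exact div_nonneg zero_le_one (le_of_lt (hApos n hn1 hnN))
      · rw [hPrec n j hj1 h hnN]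
        have hAj := hApos j hj1 (by omega)
        apply mul_nonneg (by positivity)
        apply Finset.sum_nonneg
        intro k hk
        simp only [Finset.mem_Icc] at hk
        have h1 := hA1 k (k - j + 1) (by omega) (by omega) (by omega)
        have e2 : k - j + 1 - 2 = k - j - 1 := by omega
        have e1 : k - j + 1 - 1 = k - j := by omega
        rw [e2, e1] at h1
        have hP := IH k (by omega) hk.2 (by omega)
        have : A k (k - j) ≤ A k (k - j - 1) := h1.1
        nlinarith
  have hPnonneg : ∀ j, 1 ≤ j → j ≤ n → 0 ≤ P n j := fun j hj1 hjn =>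
    hPnn (n - j) j hj1 hjn le_rfl
  -- key identity: Σ_{j=m}^n P n j * A j (j-m) = 1
  have key : ∀ d m, 1 ≤ m → m ≤ n → n - m ≤ d →
      ∑ j ∈ Finset.Icc m n, P n j * A j (j - m) = 1 := by
    intro d
    induction d with
    | zero =>
      intro m hm1 hmn hd
      have hm : m = n := by omega
      rw [hm, Finset.Icc_self, Finset.sum_singleton, hPdiag n hn1 hnN, Nat.sub_self]
      field_simp [ne_of_gt (hApos n hn1 hnN)]
    | succ d IH =>
      intro m hm1 hmn hd
      rcases eq_or_lt_of_le hmn with h | h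
      · rw [h, Finset.Icc_self, Finset.sum_singleton, hPdiag n hn1 hnN, Nat.sub_self]
        field_simp [ne_of_gt (hApos n hn1 hnN)]
      · have hsplit : Finset.Icc m n = insert m (Finset.Icc (m + 1) n) := by
          ext x; simp only [Finset.mem_Icc, Finset.mem_insert]; omega
        rw [hsplit, Finset.sum_insert (by simp)]
        have hAm := hApos m hm1 (by omega)
        have hPm : P n m * A m 0 =
            ∑ k ∈ Finset.Icc (m + 1) n, (A k (k - m - 1) - A k (k - m)) * P n k := by
          rw [hPrec n m hm1 h hnN]
          field_simp
        rw [Nat.sub_self, hPm, ← Finset.sum_add_distrib]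
        have : ∀ k ∈ Finset.Icc (m + 1) n,
            (A k (k - m - 1) - A k (k - m)) * P n k + P n k * A k (k - m)
              = P n k * A k (k - (m + 1)) := by
          intro k hk
          have : k - (m + 1) = k - m - 1 := by omega
          rw [this]; ring
        rw [Finset.sum_congr rfl this]
        exact IH (m + 1) (by omega) (by omega) (by omega)
  have hid := key (n - 1) 1 le_rfl hn1 le_rfl
  have hsplit : Finset.Icc 1 n = insert 1 (Finset.Icc 2 n) := by
    ext x; simp only [Finset.mem_Icc, Finset.mem_insert]; omega
  rw [hsplit, Finset.sum_insert (by simp)] at hid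
  norm_num at hid
  have htail : 0 ≤ ∑ j ∈ Finset.Icc 2 n, P n j * A j (j - 1) := by
    apply Finset.sum_nonneg
    intro j hj
    simp only [Finset.mem_Icc] at hj
    have h1 := hA1 j j (by omega) le_rfl (by omega)
    exact mul_nonneg (hPnonneg j (by omega) hj.2) (le_of_lt h1.2)
  have hmain : P n 1 * A 1 0 ≤ 1 := by linarith
  refine ⟨hmain, fun hA10 => ?_⟩
  have hτ : 0 < t 1 - t 0 := by
    have := hmesh 1 le_rfl hN
    norm_num at this
    linarith
  have hΓ : 0 < Real.Gamma (2 - α) := Real.Gamma_pos_of_pos (by linarith)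
  have hA10pos : 0 < A 1 0 := hApos 1 le_rfl hN
  have hinv : 1 / A 1 0 = Real.Gamma (2 - α) * (t 1 - t 0) ^ α := by
    rw [hA10]
    unfold omegaK
    have he : (2 : ℝ) - α - 1 = 1 - α := by ring
    rw [he]
    have hrp : (0:ℝ) < (t 1 - t 0) ^ (1 - α) := Real.rpow_pos_of_pos hτ _
    rw [div_div, one_div, inv_div, mul_comm (Real.Gamma (2 - α))]
    rw [div_eq_iff (ne_of_gt hrp)]
    rw [mul_assoc, mul_comm ((t 1 - t 0) ^ α), ← Real.rpow_add hτ]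
    norm_num [Real.rpow_one]
    ring
  calc P n 1 ≤ 1 / A 1 0 := by
        rw [le_div_iff₀ hA10pos]; exact hmain
    _ = _ := hinv
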